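/- Let p ≥ 1 and let N* be the real vector space of p×p complex skew-Hermitian matrices with Euclidean norm ‖m‖ = (Tr(m mᴴ))^{1/2} and Lebesgue measure. For every skew-Hermitian n, the L² norm of the cocycle β(n)(m) = (e^{i·Tr(nm)} − 1)·e^{-‖m‖}/‖m‖^{p²/2} satisfies ‖β(n)‖² = ∫_Ω log(1 + (Tr(nω))²/4) dω, where Ω = {ω ∈ N* : ‖ω‖ = 1} is the unit sphere of N* and dω is the surface measure on Ω induced by the Lebesgue measure via polar coordinates dm = r^{p²−1} dr dω. -/

import Mathlib

open MeasureTheory Matrix Set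
open scoped ENNReal

noncomputable section

instance (p : ℕ) : MeasurableSpace (Matrix (Fin p) (Fin p) ℂ) :=
  inferInstanceAs (MeasurableSpace ((Fin p) → (Fin p) → ℂ))

instance (p : ℕ) : BorelSpace (Matrix (Fin p) (Fin p) ℂ) :=
  inferInstanceAs (BorelSpace ((Fin p) → (Fin p) → ℂ))

/-- `N*`, the real vector space of `p×p` complex skew-Hermitian matrices (`mᴴ = -m`),
of real dimension `p²`. -/
abbrev SkewHerm (p : ℕ) : Type := skewAdjoint (Matrix (Fin p) (Fin p) ℂ)

/-- The Euclidean (Frobenius) norm `‖m‖ = (Tr (m mᴴ))^{1/2}` on matrices. -/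
def matNorm {p : ℕ} (m : Matrix (Fin p) (Fin p) ℂ) : ℝ :=
  Real.sqrt ((m * mᴴ).trace.re)

/-- The function `f₀(m) = e^{-‖m‖} / ‖m‖^{p²/2}` on `N*`. -/
def f₀ (p : ℕ) (m : SkewHerm p) : ℝ :=
  Real.exp (-matNorm (m : Matrix (Fin p) (Fin p) ℂ)) /
    matNorm (m : Matrix (Fin p) (Fin p) ℂ) ^ ((p ^ 2 : ℝ) / 2)

/-- The action `m ↦ sᴴ m s` of a matrix `s` on the space `N*` of skew-Hermitian matrices. -/
def conjAct {p : ℕ} (s : Matrix (Fin p) (Fin p) ℂ) (m : SkewHerm p) : SkewHerm p :=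
  ⟨sᴴ * (m : Matrix (Fin p) (Fin p) ℂ) * s, by
    have hm : (m : Matrix (Fin p) (Fin p) ℂ)ᴴ = -(m : Matrix (Fin p) (Fin p) ℂ) := m.2
    simp [skewAdjoint.mem_iff, Matrix.star_eq_conjTranspose, Matrix.conjTranspose_mul,
      Matrix.mul_assoc, hm]⟩

/-- The operator `T_a(s) f (m) = (‖sᴴ m s‖/‖m‖)^{p²/2} · f(sᴴ m s)` associated with the
multiplicative cocycle `a(m) = ‖m‖^{p²/2}`. -/
def Ta (p : ℕ) (s : Matrix (Fin p) (Fin p) ℂ) (f : SkewHerm p → ℂ) : SkewHerm p → ℂ :=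
  fun m =>
    (((matNorm (sᴴ * (m : Matrix (Fin p) (Fin p) ℂ) * s) /
        matNorm (m : Matrix (Fin p) (Fin p) ℂ)) ^ ((p ^ 2 : ℝ) / 2) : ℝ) : ℂ) *
      f (conjAct s m)


section Helpers

open Filter

private lemma lint_FTC' {a l : ℝ} {g g' : ℝ → ℝ}
    (hderiv : ∀ x ∈ Ici a, HasDerivAt g (g' x) x)
    (g'pos : ∀ x ∈ Ioi a, 0 ≤ g' x)
    (hg : Filter.Tendsto g Filter.atTop (nhds l)) :
    ∫⁻ x in Ioi a, ENNReal.ofReal (g' x) = ENNReal.ofReal (l - g a) := by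
  rw [← integral_Ioi_of_hasDerivAt_of_nonneg' hderiv g'pos hg,
    ← ofReal_integral_eq_lintegral_ofReal
      (integrableOn_Ioi_deriv_of_nonneg' hderiv g'pos hg)
      ((ae_restrict_iff' measurableSet_Ioi).2 (Filter.Eventually.of_forall g'pos))]

private lemma step1' {r : ℝ} (hr : 0 < r) :
    ∫⁻ s in Ioi (2:ℝ), ENNReal.ofReal (Real.exp (-(s*r))) =
      ENNReal.ofReal (Real.exp (-(2*r)) / r) := by
  have h := lint_FTC' (a := 2) (l := 0) (g := fun s => -(Real.exp (-(s*r)) / r))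
    (g' := fun s => Real.exp (-(s*r)))
    (fun x _ => by
      have : HasDerivAt (fun s : ℝ => -(s*r)) (-r) x := by
        have h := ((hasDerivAt_id' x).mul_const r).neg; rwa [one_mul] at h
      have h2 := (this.exp).div_const r
      refine h2.neg.congr_deriv ?_
      field_simp)
    (fun x _ => (Real.exp_pos _).le)
    (by
      have : Tendsto (fun s : ℝ => Real.exp (-(s*r)) / r) atTop (nhds 0) := by
        have h1 : Tendsto (fun s : ℝ => s*r) atTop atTop :=
          Tendsto.atTop_mul_const hr tendsto_id
        have h2 := (Real.tendsto_exp_neg_atTop_nhds_zero.comp h1).div_const r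
        simpa only [Function.comp_def, zero_div] using h2
      simpa using this.neg)
  simpa using h

private lemma step3' (t : ℝ) {s : ℝ} (hs : 0 < s) :
    ∫⁻ r in Ioi (0:ℝ), ENNReal.ofReal ((2 - 2*Real.cos (t*r)) * Real.exp (-(s*r))) =
      ENNReal.ofReal (2*t^2 / (s*(s^2+t^2))) := by
  have hst : (0:ℝ) < s^2 + t^2 := by positivity
  have h := lint_FTC' (a := 0) (l := 0)
    (g := fun r => -(2*Real.exp (-(s*r))/s) -
      2*(Real.exp (-(s*r)) * (t * Real.sin (t*r) - s * Real.cos (t*r)))/(s^2+t^2))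
    (g' := fun r => (2 - 2*Real.cos (t*r)) * Real.exp (-(s*r)))
    (fun x _ => by
      have he : HasDerivAt (fun r : ℝ => Real.exp (-(s*r))) (Real.exp (-(s*x)) * (-s)) x := by
        have : HasDerivAt (fun r : ℝ => -(s*r)) (-s) x := by
          have h := ((hasDerivAt_id' x).const_mul s).neg; rwa [mul_one] at h
        simpa using this.exp
      have hsin : HasDerivAt (fun r : ℝ => Real.sin (t*r)) (Real.cos (t*x) * t) x := by
        have ht : HasDerivAt (fun r : ℝ => t*r) t x := by
          simpa using (hasDerivAt_id x).const_mul t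
        exact (Real.hasDerivAt_sin (t*x)).comp x ht
      have hcos : HasDerivAt (fun r : ℝ => Real.cos (t*r)) (-Real.sin (t*x) * t) x := by
        have ht : HasDerivAt (fun r : ℝ => t*r) t x := by
          simpa using (hasDerivAt_id x).const_mul t
        exact (Real.hasDerivAt_cos (t*x)).comp x ht
      have h1 : HasDerivAt (fun r : ℝ => t * Real.sin (t*r) - s * Real.cos (t*r))
          (t * (Real.cos (t*x) * t) - s * (-Real.sin (t*x) * t)) x :=
        (hsin.const_mul t).sub (hcos.const_mul s)
      have h2 := he.mul h1
      have h3 := ((he.const_mul 2).div_const s).neg.sub ((h2.const_mul 2).div_const (s^2+t^2))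
      refine h3.congr_deriv ?_
      field_simp
      ring)
    (fun x _ => by
      have h1 : Real.cos (t*x) ≤ 1 := Real.cos_le_one _
      have h2 : (0:ℝ) ≤ Real.exp (-(s*x)) := (Real.exp_pos _).le
      have : (0:ℝ) ≤ 2 - 2*Real.cos (t*x) := by linarith
      exact mul_nonneg this h2)
    (by
      have h1 : Tendsto (fun r : ℝ => s*r) atTop atTop :=
        Tendsto.const_mul_atTop hs tendsto_id
      have hexp : Tendsto (fun r : ℝ => Real.exp (-(s*r))) atTop (nhds 0) := by
        simpa only [Function.comp_def] using Real.tendsto_exp_neg_atTop_nhds_zero.comp h1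
      have hb : Tendsto (fun r : ℝ =>
          Real.exp (-(s*r)) * (t * Real.sin (t*r) - s * Real.cos (t*r))) atTop (nhds 0) := by
        apply squeeze_zero_norm (a := fun r => Real.exp (-(s*r)) * (|t| + |s|))
        · intro x
          rw [Real.norm_eq_abs, abs_mul, Real.abs_exp]
          apply mul_le_mul_of_nonneg_left _ (Real.exp_pos _).le
          calc |t * Real.sin (t*x) - s * Real.cos (t*x)|
              ≤ |t * Real.sin (t*x)| + |s * Real.cos (t*x)| := abs_sub _ _
            _ ≤ |t| + |s| := by
                rw [abs_mul, abs_mul]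
                gcongr
                · exact mul_le_of_le_one_right (abs_nonneg _)
                    (abs_le_one_iff_mul_self_le_one.mpr
                      (by nlinarith [Real.sin_sq_add_cos_sq (t*x), Real.neg_one_le_sin (t*x),
                        Real.sin_le_one (t*x)]))
                · exact mul_le_of_le_one_right (abs_nonneg _) (Real.abs_cos_le_one _)
        · simpa using hexp.mul_const (|t| + |s|)
      have := ((hexp.const_mul 2).div_const s).neg.sub ((hb.const_mul 2).div_const (s^2+t^2))
      simpa using this)
  rw [h]
  congr 1
  simp only [mul_zero, neg_zero, Real.exp_zero, Real.sin_zero, Real.cos_zero]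
  field_simp
  ring

private lemma step4' (t : ℝ) :
    ∫⁻ s in Ioi (2:ℝ), ENNReal.ofReal (2*t^2 / (s*(s^2+t^2))) =
      ENNReal.ofReal (Real.log (1 + t^2/4)) := by
  have h := lint_FTC' (a := 2) (l := 0)
    (g := fun s => 2*Real.log s - Real.log (s^2+t^2))
    (g' := fun s => 2*t^2 / (s*(s^2+t^2)))
    (fun x hx => by
      have hx0 : (0:ℝ) < x := lt_of_lt_of_le two_pos hx
      have hxt : (0:ℝ) < x^2 + t^2 := by positivity
      have h1 : HasDerivAt (fun s : ℝ => 2*Real.log s) (2*x⁻¹) x :=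
        (Real.hasDerivAt_log hx0.ne').const_mul 2
      have hsq : HasDerivAt (fun s : ℝ => s^2 + t^2) (2*x) x := by
        simpa using ((hasDerivAt_pow 2 x).add_const (t^2))
      have h2 : HasDerivAt (fun s : ℝ => Real.log (s^2+t^2)) ((2*x) / (x^2+t^2)) x := by
        have := (Real.hasDerivAt_log hxt.ne').comp x hsq
        rw [div_eq_inv_mul]; exact this
      refine (h1.sub h2).congr_deriv ?_
      field_simp
      ring)
    (fun x hx => by
      have hx0 : (0:ℝ) < x := lt_trans two_pos hx
      have : (0:ℝ) < x^2 + t^2 := by positivity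
      positivity)
    (by
      have hlim : Tendsto (fun s : ℝ => 1 + t^2/s^2) atTop (nhds 1) := by
        have h0 : Tendsto (fun s : ℝ => t^2/s^2) atTop (nhds 0) :=
          tendsto_const_nhds.div_atTop (tendsto_pow_atTop two_ne_zero)
        simpa using tendsto_const_nhds.add h0
      have h0 : Tendsto (fun s : ℝ => -Real.log (1 + t^2/s^2)) atTop (nhds 0) := by
        have := ((Real.continuousAt_log one_ne_zero).tendsto).comp hlim
        simpa using this.neg
      apply h0.congr'
      filter_upwards [eventually_gt_atTop (0:ℝ)] with s hs
      have hs2 : (0:ℝ) < s^2 := by positivity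
      have hst : (0:ℝ) < s^2 + t^2 := by positivity
      have he : (1 : ℝ) + t^2/s^2 = (s^2+t^2)/s^2 := by field_simp
      rw [he, Real.log_div hst.ne' hs2.ne', Real.log_pow]
      push_cast
      ring)
  rw [h]
  have h4 : (0:ℝ) < 4 + t^2 := by positivity
  have he : Real.log (1 + t^2/4) = Real.log (4+t^2) - 2*Real.log 2 := by
    have h1 : (1:ℝ) + t^2/4 = (4+t^2)/4 := by ring
    rw [h1, Real.log_div h4.ne' (by norm_num)]
    have h2 : (4:ℝ) = 2^2 := by norm_num
    rw [h2, Real.log_pow]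
    push_cast; ring
  rw [he]
  norm_num

private lemma lemA' (t : ℝ) :
    ∫⁻ r in Ioi (0:ℝ),
        ENNReal.ofReal ((2 - 2*Real.cos (t*r)) * Real.exp (-(2*r)) / r) =
      ENNReal.ofReal (Real.log (1 + t^2/4)) := by
  have key : ∀ᵐ r ∂(volume : Measure ℝ), r ∈ Ioi (0:ℝ) →
      ENNReal.ofReal ((2 - 2*Real.cos (t*r)) * Real.exp (-(2*r)) / r) =
        ∫⁻ s in Ioi (2:ℝ), ENNReal.ofReal ((2 - 2*Real.cos (t*r)) * Real.exp (-(s*r))) := by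
    refine ae_of_all _ fun r hr => ?_
    have hA : (0:ℝ) ≤ 2 - 2*Real.cos (t*r) := by
      have := Real.cos_le_one (t*r); linarith
    calc ENNReal.ofReal ((2 - 2*Real.cos (t*r)) * Real.exp (-(2*r)) / r)
        = ENNReal.ofReal (2 - 2*Real.cos (t*r)) * ENNReal.ofReal (Real.exp (-(2*r)) / r) := by
          rw [mul_div_assoc, ENNReal.ofReal_mul hA]
      _ = ENNReal.ofReal (2 - 2*Real.cos (t*r)) *
            ∫⁻ s in Ioi (2:ℝ), ENNReal.ofReal (Real.exp (-(s*r))) := by rw [step1' hr]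
      _ = ∫⁻ s in Ioi (2:ℝ),
            ENNReal.ofReal (2 - 2*Real.cos (t*r)) * ENNReal.ofReal (Real.exp (-(s*r))) := by
          rw [lintegral_const_mul' _ _ ENNReal.ofReal_ne_top]
      _ = _ := by
          refine lintegral_congr fun s => ?_
          rw [← ENNReal.ofReal_mul hA]
  rw [setLIntegral_congr_fun_ae measurableSet_Ioi key]
  have hcont : Continuous (fun q : ℝ × ℝ =>
      ENNReal.ofReal ((2 - 2*Real.cos (t*q.1)) * Real.exp (-(q.2*q.1)))) := by
    apply ENNReal.continuous_ofReal.comp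
    fun_prop
  rw [lintegral_lintegral_swap (hcont.measurable.aemeasurable)]
  rw [setLIntegral_congr_fun_ae measurableSet_Ioi
    (ae_of_all _ fun s (hs : s ∈ Ioi (2:ℝ)) => step3' t (lt_trans two_pos hs))]
  exact step4' t

private lemma matNorm_smul' {p : ℕ} (r : ℝ) (A : Matrix (Fin p) (Fin p) ℂ) :
    matNorm (r • A) = |r| * matNorm A := by
  unfold matNorm
  have h : (r • A) * (r • A)ᴴ = (r*r) • (A * Aᴴ) := by
    rw [Matrix.conjTranspose_smul, star_trivial, Matrix.smul_mul, Matrix.mul_smul, smul_smul]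
  rw [h, Matrix.trace_smul, Complex.smul_re, smul_eq_mul,
    Real.sqrt_mul (mul_self_nonneg r), Real.sqrt_mul_self_eq_abs]

private lemma trace_real' {p : ℕ} (n : Matrix (Fin p) (Fin p) ℂ) (hn : nᴴ = -n)
    (ω : SkewHerm p) :
    (n * (ω : Matrix (Fin p) (Fin p) ℂ)).trace =
      (((n * (ω : Matrix (Fin p) (Fin p) ℂ)).trace.re : ℝ) : ℂ) := by
  have hω : (ω : Matrix (Fin p) (Fin p) ℂ)ᴴ = -(ω : Matrix (Fin p) (Fin p) ℂ) := ω.2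
  have key : (starRingEnd ℂ) ((n * (ω : Matrix (Fin p) (Fin p) ℂ)).trace) =
      (n * (ω : Matrix (Fin p) (Fin p) ℂ)).trace := by
    calc (starRingEnd ℂ) ((n * (ω : Matrix (Fin p) (Fin p) ℂ)).trace)
        = ((n * (ω : Matrix (Fin p) (Fin p) ℂ))ᴴ).trace := (Matrix.trace_conjTranspose _).symm
      _ = ((ω : Matrix (Fin p) (Fin p) ℂ)ᴴ * nᴴ).trace := by rw [Matrix.conjTranspose_mul]
      _ = ((-(ω : Matrix (Fin p) (Fin p) ℂ)) * (-n)).trace := by rw [hω, hn]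
      _ = ((ω : Matrix (Fin p) (Fin p) ℂ) * n).trace := by rw [neg_mul_neg]
      _ = _ := Matrix.trace_mul_comm _ _
  exact (Complex.conj_eq_iff_re.mp key).symm

private lemma absB' (x : ℝ) :
    ‖Complex.exp (Complex.I * (x:ℂ)) - 1‖ ^ 2 = 2 - 2*Real.cos x := by
  rw [mul_comm, Complex.exp_mul_I, Complex.sq_norm]
  simp only [Complex.normSq_apply, Complex.sub_re, Complex.add_re, Complex.cos_ofReal_re,
    Complex.mul_re, Complex.sin_ofReal_re, Complex.I_re, Complex.I_im, Complex.sin_ofReal_im,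
    Complex.one_re, Complex.sub_im, Complex.add_im, Complex.cos_ofReal_im, Complex.mul_im,
    Complex.one_im]
  nlinarith [Real.sin_sq_add_cos_sq x]

private lemma matNorm_cont' {p : ℕ} :
    Continuous (fun A : Matrix (Fin p) (Fin p) ℂ => matNorm A) := by
  unfold matNorm
  exact Real.continuous_sqrt.comp (Complex.continuous_re.comp
    ((continuous_id.matrix_mul continuous_id.matrix_conjTranspose).matrix_trace))

end Helpers

/-- The squared `L²` norm of the cocycle `β(n)(m) = (e^{i Tr(nm)} − 1) e^{-‖m‖}/‖m‖^{p²/2}`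
equals `∫_Ω log (1 + (Tr (n ω))²/4) dω`, where `Ω` is the unit sphere of `N*` and `dω` is
the surface measure induced by the Lebesgue measure via the polar decomposition
`dm = r^{p²−1} dr dω`. -/
theorem cocycle_beta_norm_formula (p : ℕ) (hp : 1 ≤ p)
    (μ : Measure (SkewHerm p)) [μ.IsAddHaarMeasure]
    (σ : Measure {ω : SkewHerm p // matNorm (ω : Matrix (Fin p) (Fin p) ℂ) = 1})
    (hpolar : ∀ f : SkewHerm p → ℝ≥0∞, Measurable f →
      ∫⁻ m, f m ∂μ =
        ∫⁻ ω, (∫⁻ r in Ioi (0 : ℝ),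
          f (r • (ω : SkewHerm p)) * ENNReal.ofReal (r ^ (p ^ 2 - 1)) ∂volume) ∂σ)
    (n : Matrix (Fin p) (Fin p) ℂ) (hn : nᴴ = -n) :
    ∫⁻ m, ENNReal.ofReal
        (‖(Complex.exp (Complex.I * (n * (m : Matrix (Fin p) (Fin p) ℂ)).trace) - 1) *
            (f₀ p m : ℂ)‖ ^ 2) ∂μ
      = ∫⁻ ω, ENNReal.ofReal
          (Real.log (1 +
            ((n * ((ω : SkewHerm p) : Matrix (Fin p) (Fin p) ℂ)).trace.re) ^ 2 / 4)) ∂σ := by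
  classical
  set F : SkewHerm p → ℝ≥0∞ := fun m => ENNReal.ofReal
    (‖(Complex.exp (Complex.I * (n * (m : Matrix (Fin p) (Fin p) ℂ)).trace) - 1) *
        (f₀ p m : ℂ)‖ ^ 2) with hFdef
  have hcoe : Measurable (fun m : SkewHerm p => (m : Matrix (Fin p) (Fin p) ℂ)) :=
    measurable_subtype_coe
  have htr : Continuous (fun A : Matrix (Fin p) (Fin p) ℂ => (n * A).trace) :=
    (continuous_const.matrix_mul continuous_id).matrix_trace
  have hnormm : Measurable (fun m : SkewHerm p =>
      matNorm (m : Matrix (Fin p) (Fin p) ℂ)) := matNorm_cont'.measurable.comp hcoe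
  have hf0 : Measurable (f₀ p) := by
    unfold f₀
    exact (Real.continuous_exp.measurable.comp hnormm.neg).div
      ((Real.continuous_rpow_const (by positivity)).measurable.comp hnormm)
  have hF : Measurable F := by
    apply Measurable.ennreal_ofReal
    apply Measurable.pow_const
    apply continuous_norm.measurable.comp
    exact ((Complex.continuous_exp.measurable.comp
        ((continuous_const.mul htr).measurable.comp hcoe)).sub measurable_const).mul
      (Complex.continuous_ofReal.measurable.comp hf0)
  rw [hpolar F hF]
  refine lintegral_congr fun ω => ?_
  set A : Matrix (Fin p) (Fin p) ℂ := ((ω : SkewHerm p) : Matrix (Fin p) (Fin p) ℂ) with hA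
  set t : ℝ := (n * A).trace.re with ht
  have hωn : matNorm A = 1 := ω.2
  rw [setLIntegral_congr_fun_ae measurableSet_Ioi (ae_of_all _ fun r (hr : r ∈ Ioi (0:ℝ)) => ?_),
    lemA' t]
  have hr : (0:ℝ) < r := hr
  have hr0 : r ≠ 0 := hr.ne'
  -- the coercion of the scaled element
  have hsc : (((r • (ω : SkewHerm p)) : SkewHerm p) : Matrix (Fin p) (Fin p) ℂ) = r • A := rfl
  have hnr : matNorm ((r • (ω : SkewHerm p) : SkewHerm p) : Matrix (Fin p) (Fin p) ℂ) = r := by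
    rw [hsc, matNorm_smul', hωn, abs_of_pos hr, mul_one]
  have htr2 : (n * (((r • (ω : SkewHerm p)) : SkewHerm p) : Matrix (Fin p) (Fin p) ℂ)).trace =
      ((r * t : ℝ) : ℂ) := by
    rw [hsc, Matrix.mul_smul, Matrix.trace_smul, trace_real' n hn (ω : SkewHerm p), ← hA, ← ht,
      Complex.real_smul]
    push_cast
    ring
  have hf0v : f₀ p (r • (ω : SkewHerm p)) = Real.exp (-r) / r ^ ((p ^ 2 : ℝ) / 2) := by
    unfold f₀
    rw [hnr]
  have hE : (0:ℝ) ≤ Real.exp (-r) / r ^ ((p ^ 2 : ℝ) / 2) := by positivity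
  have habs : ‖
      ((Complex.exp (Complex.I *
          (n * (((r • (ω : SkewHerm p)) : SkewHerm p) : Matrix (Fin p) (Fin p) ℂ)).trace) - 1) *
        (f₀ p (r • (ω : SkewHerm p)) : ℂ))‖ ^ 2 =
      (2 - 2*Real.cos (r * t)) * (Real.exp (-r) / r ^ ((p ^ 2 : ℝ) / 2)) ^ 2 := by
    rw [htr2, hf0v, norm_mul, mul_pow, absB' (r*t), Complex.norm_real, Real.norm_eq_abs, abs_of_nonneg hE]
  have hcos : (0:ℝ) ≤ 2 - 2*Real.cos (r*t) := by
    have := Real.cos_le_one (r*t); linarith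
  have hmain : (2 - 2*Real.cos (r * t)) * (Real.exp (-r) / r ^ ((p ^ 2 : ℝ) / 2)) ^ 2 *
      r ^ (p ^ 2 - 1) = (2 - 2*Real.cos (t*r)) * Real.exp (-(2*r)) / r := by
    have hexp2 : Real.exp (-r) ^ 2 = Real.exp (-(2*r)) := by
      rw [sq, ← Real.exp_add]; ring_nf
    have hpow : (r ^ ((p ^ 2 : ℝ) / 2)) ^ 2 = r ^ (p ^ 2 : ℕ) := by
      rw [← Real.rpow_natCast (r ^ ((p ^ 2 : ℝ) / 2)) 2, ← Real.rpow_mul hr.le]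
      norm_num
      rw [← Real.rpow_natCast r (p^2)]
      norm_num
    have hsplit : r ^ (p ^ 2 : ℕ) = r ^ (p ^ 2 - 1) * r := by
      conv_lhs => rw [show p ^ 2 = (p ^ 2 - 1) + 1 by
        have : 1 ≤ p ^ 2 := Nat.one_le_iff_ne_zero.mpr (pow_ne_zero 2 (by omega))
        omega]
      rw [pow_succ]
    rw [div_pow, hexp2, hpow, hsplit, mul_comm t r]
    have hpk : r ^ (p ^ 2 - 1) ≠ 0 := pow_ne_zero _ hr0
    field_simp
  show F (r • (ω : SkewHerm p)) * ENNReal.ofReal (r ^ (p ^ 2 - 1)) =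
    ENNReal.ofReal ((2 - 2*Real.cos (t*r)) * Real.exp (-(2*r)) / r)
  rw [hFdef]
  simp only []
  rw [habs, ← ENNReal.ofReal_mul (mul_nonneg hcos (sq_nonneg _)), hmain]

end
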